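/- arXiv:2501.14577 — 2 statements merged into one kernel-verified Lean document; each statement's English description precedes it below -/
import Mathlib

section
/- Let C₁, …, C_r be measurable subsets of a domain X, let D be a probability distribution on X, and let S be a sequence of m points sampled i.i.d. from D. Then the expectation over S of the sum of P[C_i] over all indices i with C_i ∩ S = ∅ is at most r/(m·e). -/
open MeasureTheory in
lemma missed_mass_aux (m : ℕ) (hm : 0 < m) (a : ℝ) (ha : 0 ≤ a) (ha1 : a ≤ 1) :
    (1 - a) ^ m * a ≤ 1 / (m * Real.exp 1) := by
  have h1 : (1 - a) ≤ Real.exp (-a) := by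
    have := Real.add_one_le_exp (-a); linarith
  have h2 : (1 - a) ^ m ≤ Real.exp (-a) ^ m :=
    pow_le_pow_left₀ (by linarith) h1 m
  have h3 : Real.exp (-a) ^ m = Real.exp (-(a * m)) := by
    rw [← Real.exp_nat_mul]; ring_nf
  set x : ℝ := a * m with hx
  have hx0 : 0 ≤ x := mul_nonneg ha (Nat.cast_nonneg m)
  have hxe : x * Real.exp (-x) ≤ Real.exp (-1) := by
    have h4 : x ≤ Real.exp (x - 1) := by
      have := Real.add_one_le_exp (x - 1); linarith
    calc x * Real.exp (-x) ≤ Real.exp (x - 1) * Real.exp (-x) :=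
          mul_le_mul_of_nonneg_right h4 (Real.exp_pos _).le
      _ = Real.exp (-1) := by rw [← Real.exp_add]; ring_nf
  have hm' : (0:ℝ) < m := Nat.cast_pos.mpr hm
  have : (1 - a) ^ m * a ≤ Real.exp (-x) * a := by
    apply mul_le_mul_of_nonneg_right _ ha
    rw [← h3]; exact h2
  calc (1 - a) ^ m * a ≤ Real.exp (-x) * a := this
    _ = (1 / m) * (x * Real.exp (-x)) := by field_simp [hx]; ring
    _ ≤ (1 / m) * Real.exp (-1) := by
        apply mul_le_mul_of_nonneg_left hxe (by positivity)
    _ = 1 / (m * Real.exp 1) := by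
        rw [Real.exp_neg]; field_simp

open MeasureTheory Classical in
/-- Missed-mass lemma: for measurable sets `C₁, …, C_r` and `m` i.i.d. samples
from a probability distribution `μ`, the expected total probability mass of the
sets missed by the sample is at most `r/(m·e)`. -/
theorem expected_missed_mass_le
    {X : Type*} [MeasurableSpace X] (μ : Measure X) [IsProbabilityMeasure μ]
    (r m : ℕ) (hm : 0 < m) (C : Fin r → Set X) (hC : ∀ i, MeasurableSet (C i)) :
    ∫ S : Fin m → X,
        (∑ i ∈ Finset.univ.filter (fun i : Fin r => ∀ j : Fin m, S j ∉ C i),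
          (μ (C i)).toReal) ∂(Measure.pi fun _ => μ)
      ≤ r / (m * Real.exp 1) := by
  set ν : Measure (Fin m → X) := Measure.pi fun _ => μ with hν
  set p : Fin r → ℝ := fun i => (μ (C i)).toReal with hp
  set A : Fin r → Set (Fin m → X) := fun i => Set.pi Set.univ (fun _ => (C i)ᶜ) with hA
  have hAmeas : ∀ i, MeasurableSet (A i) := fun i =>
    MeasurableSet.univ_pi (fun _ => (hC i).compl)
  have hmem : ∀ (i : Fin r) (S : Fin m → X), S ∈ A i ↔ ∀ j : Fin m, S j ∉ C i := by
    intro i S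
    simp [hA, Set.mem_pi]
  have key : ∀ S : Fin m → X,
      (∑ i ∈ Finset.univ.filter (fun i : Fin r => ∀ j : Fin m, S j ∉ C i), p i)
        = ∑ i : Fin r, (A i).indicator (fun _ => p i) S := by
    intro S
    rw [Finset.sum_filter]
    refine Finset.sum_congr rfl fun i _ => ?_
    by_cases h : ∀ j : Fin m, S j ∉ C i
    · rw [if_pos h, Set.indicator_of_mem ((hmem i S).mpr h)]
    · rw [if_neg h, Set.indicator_of_notMem (fun hc => h ((hmem i S).mp hc))]
  simp_rw [key]
  have hint : ∀ i : Fin r, Integrable ((A i).indicator (fun _ => p i)) ν :=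
    fun i => (integrable_const (p i)).indicator (hAmeas i)
  rw [integral_finset_sum _ (fun i _ => hint i)]
  have hmeasA : ∀ i, ν (A i) = (μ (C i)ᶜ) ^ m := by
    intro i
    rw [hν, Measure.pi_pi]
    simp
  have hval : ∀ i : Fin r,
      ∫ S, (A i).indicator (fun _ => p i) S ∂ν = (1 - p i) ^ m * p i := by
    intro i
    rw [integral_indicator_const _ (hAmeas i), measureReal_def, hmeasA i, smul_eq_mul]
    congr 1
    rw [ENNReal.toReal_pow]
    congr 1
    rw [prob_compl_eq_one_sub (hC i), ENNReal.toReal_sub_of_le prob_le_one (by simp)]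
    simp [hp]
  have hbound : ∀ i : Fin r, (1 - p i) ^ m * p i ≤ 1 / (m * Real.exp 1) := by
    intro i
    exact missed_mass_aux m hm (p i) ENNReal.toReal_nonneg
      (by simpa [hp] using ENNReal.toReal_le_of_le_ofReal one_pos.le (by simpa using prob_le_one))
  calc ∑ i : Fin r, ∫ S, (A i).indicator (fun _ => p i) S ∂ν
      = ∑ i : Fin r, (1 - p i) ^ m * p i := Finset.sum_congr rfl fun i _ => hval i
    _ ≤ ∑ _i : Fin r, 1 / (m * Real.exp 1) :=
        Finset.sum_le_sum fun i _ => hbound i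
    _ = r / (m * Real.exp 1) := by
        rw [Finset.sum_const]
        simp [Finset.card_univ]
        ring
end

section
/- Let D be a probability distribution on [-B, B]^{d_K}, let q and k₁, …, k_m be i.i.d. samples from D, and let k_{π₁(q)} denote the sample closest to q in Euclidean norm. Then E[‖k_{π₁(q)} − q‖] ≤ 4·√(d_K)·B·m^{-1/(d_K+1)}. -/
open MeasureTheory ENNReal

lemma two_mul_le_exp' {x : ℝ} (hx : 0 ≤ x) : 2 * x ≤ Real.exp x := by
  rcases le_total x 1 with h | h
  · nlinarith [Real.add_one_le_exp x]
  · have h1 : x ≤ Real.exp (x - 1) := by nlinarith [Real.add_one_le_exp (x - 1)]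
    have h2 : Real.exp (x - 1) * Real.exp 1 = Real.exp x := by
      rw [← Real.exp_add]; ring_nf
    nlinarith [Real.exp_one_gt_d9, Real.exp_pos (x - 1)]

lemma missed_mass' {m : ℕ} (hm : 0 < m) {x : ℝ} (h0 : 0 ≤ x) (h1 : x ≤ 1) :
    x * (1 - x) ^ m ≤ 1 / (2 * m) := by
  have hm' : (0:ℝ) < m := by exact_mod_cast hm
  have h2 : (1 - x) ^ m ≤ Real.exp (-(x * m)) := by
    calc (1 - x) ^ m ≤ (Real.exp (-x)) ^ m := by
          apply pow_le_pow_left₀ (by linarith)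
          nlinarith [Real.add_one_le_exp (-x)]
      _ = Real.exp (-(x * m)) := by
          rw [← Real.exp_nat_mul]; ring_nf
  have h3 := two_mul_le_exp' (x := x * m) (by positivity)
  have hE : Real.exp (-(x * m)) = (Real.exp (x * m))⁻¹ := Real.exp_neg _
  have hpos : 0 < Real.exp (x * m) := Real.exp_pos _
  calc x * (1 - x) ^ m ≤ x * Real.exp (-(x * m)) :=
        mul_le_mul_of_nonneg_left h2 h0
    _ ≤ 1 / (2 * m) := by
        rw [hE, mul_comm, inv_mul_le_iff₀ hpos]
        have h4 : Real.exp (x*↑m) * (1/(2*↑m)) * (2*↑m) = Real.exp (x*↑m) := by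
          field_simp
        nlinarith [h4, hm']

noncomputable def boxIdx' (B : ℝ) (T : ℕ) (t : ℝ) : Fin (T + 1) :=
  ⟨min T (⌊(t + B) * (T + 1) / (2 * B)⌋.toNat), Nat.lt_succ_of_le (min_le_left _ _)⟩

lemma measurable_boxIdx' (B : ℝ) (T : ℕ) : Measurable (boxIdx' B T) := by
  have h1 : Measurable fun t : ℝ => (t + B) * (T + 1) / (2 * B) := by fun_prop
  have h2 : Measurable fun t : ℝ => ⌊(t + B) * (T + 1) / (2 * B)⌋ :=
    Int.measurable_floor.comp h1
  exact (measurable_from_top (f := fun n : ℤ =>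
    (⟨min T n.toNat, Nat.lt_succ_of_le (min_le_left _ _)⟩ : Fin (T + 1)))).comp h2

lemma boxIdx'_mem {B : ℝ} (hB : 0 < B) (T : ℕ) {t : ℝ} (ht : t ∈ Set.Icc (-B) B) :
    ((boxIdx' B T t : ℕ) : ℝ) * (2 * B) ≤ (t + B) * (T + 1) ∧
      (t + B) * (T + 1) ≤ (((boxIdx' B T t : ℕ) : ℝ) + 1) * (2 * B) := by
  obtain ⟨ht1, ht2⟩ := ht
  set u := (t + B) * (T + 1) / (2 * B) with hu
  have h2B : (0:ℝ) < 2 * B := by linarith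
  have hu0 : 0 ≤ u := by
    apply div_nonneg _ (le_of_lt h2B)
    have : (0:ℝ) ≤ (T:ℝ) + 1 := by positivity
    nlinarith
  have huT : u ≤ (T:ℝ) + 1 := by
    rw [hu, div_le_iff₀ h2B]
    have : (0:ℝ) ≤ (T:ℝ) + 1 := by positivity
    nlinarith
  have hval : ((boxIdx' B T t : ℕ) : ℝ) = min (T:ℝ) (⌊u⌋.toNat : ℝ) := by
    simp only [boxIdx', hu]
    push_cast [Nat.cast_min]
    norm_num
  have hfl0 : (0:ℤ) ≤ ⌊u⌋ := Int.floor_nonneg.mpr hu0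
  have key : ((boxIdx' B T t : ℕ) : ℝ) ≤ u ∧ u ≤ ((boxIdx' B T t : ℕ) : ℝ) + 1 := by
    rcases le_or_gt (T:ℤ) ⌊u⌋ with hc | hc
    · have hTf : ((T:ℕ):ℝ) ≤ (⌊u⌋.toNat : ℝ) := by
        exact_mod_cast Int.toNat_le_toNat hc
      have hval2 : ((boxIdx' B T t : ℕ) : ℝ) = T := by
        rw [hval]; exact min_eq_left hTf
      have : ((T:ℤ):ℝ) ≤ (⌊u⌋ : ℝ) := by exact_mod_cast hc
      have hfu := Int.floor_le u
      constructor
      · rw [hval2]; push_cast at this ⊢; linarith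
      · rw [hval2]; linarith
    · have hnat : (⌊u⌋.toNat : ℤ) = ⌊u⌋ := Int.toNat_of_nonneg hfl0
      have hltn : ⌊u⌋.toNat < T := by omega
      have hcast : ((⌊u⌋.toNat : ℕ):ℝ) = ((⌊u⌋ : ℤ):ℝ) := by exact_mod_cast congrArg (fun z : ℤ => (z:ℝ)) hnat
      have hval2 : ((boxIdx' B T t : ℕ) : ℝ) = ((⌊u⌋ : ℤ) : ℝ) := by
        rw [hval, min_eq_right, hcast]
        exact_mod_cast le_of_lt hltn
      rw [hval2]
      exact ⟨Int.floor_le u, le_of_lt (Int.lt_floor_add_one u)⟩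
  rw [hu] at key
  exact ⟨(le_div_iff₀ h2B).mp key.1, (div_le_iff₀ h2B).mp key.2⟩

lemma boxIdx'_dist {B : ℝ} (hB : 0 < B) (T : ℕ) {t t' : ℝ}
    (ht : t ∈ Set.Icc (-B) B) (ht' : t' ∈ Set.Icc (-B) B)
    (h : boxIdx' B T t = boxIdx' B T t') : |t - t'| ≤ 2 * B / (T + 1) := by
  obtain ⟨h1, h2⟩ := boxIdx'_mem hB T ht
  obtain ⟨h1', h2'⟩ := boxIdx'_mem hB T ht'
  rw [h] at h1 h2
  have hT1 : (0:ℝ) < (T:ℝ) + 1 := by positivity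
  rw [abs_le]
  constructor
  · have h3 : (t' - t) * ((T:ℝ) + 1) ≤ 2 * B := by nlinarith
    have h4 := (le_div_iff₀ hT1).mpr h3
    linarith
  · have h3 : (t - t') * ((T:ℝ) + 1) ≤ 2 * B := by nlinarith
    exact (le_div_iff₀ hT1).mpr h3

lemma norm_le_of_coord {dK : ℕ} {x y : EuclideanSpace ℝ (Fin dK)} {c : ℝ} (hc : 0 ≤ c)
    (h : ∀ j, |x j - y j| ≤ c) : ‖x - y‖ ≤ Real.sqrt dK * c := by
  rw [EuclideanSpace.norm_eq]
  have step : ∀ j, ‖(x - y) j‖ ^ 2 ≤ c ^ 2 := by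
    intro j
    have hxy : (x - y) j = x j - y j := rfl
    rw [hxy, Real.norm_eq_abs, sq_abs]
    have := h j
    nlinarith [abs_nonneg (x j - y j), sq_abs (x j - y j)]
  calc Real.sqrt (∑ j, ‖(x - y) j‖ ^ 2) ≤ Real.sqrt (∑ _j : Fin dK, c ^ 2) :=
        Real.sqrt_le_sqrt (Finset.sum_le_sum fun j _ => step j)
    _ = Real.sqrt dK * c := by
        rw [Finset.sum_const, Finset.card_univ, Fintype.card_fin, nsmul_eq_mul,
          Real.sqrt_mul (Nat.cast_nonneg _), Real.sqrt_sq hc]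

lemma term_bound' {m : ℕ} (hm : 0 < m) {p : ℝ≥0∞} (hp : p ≤ 1) :
    (1 - p) ^ m * p ≤ ENNReal.ofReal (1 / (2 * m)) := by
  have hpt : p ≠ ⊤ := (lt_of_le_of_lt hp ENNReal.one_lt_top).ne
  set x := p.toReal with hx
  have hx0 : (0:ℝ) ≤ x := ENNReal.toReal_nonneg
  have hx1 : x ≤ 1 := by
    rw [hx]
    exact ENNReal.toReal_le_of_le_ofReal zero_le_one (by simpa using hp)
  have hp' : p = ENNReal.ofReal x := (ENNReal.ofReal_toReal hpt).symm
  rw [hp']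
  have h1 : (1:ℝ≥0∞) - ENNReal.ofReal x = ENNReal.ofReal (1 - x) := by
    rw [← ENNReal.ofReal_one, ← ENNReal.ofReal_sub _ hx0]
  rw [h1, ← ENNReal.ofReal_pow (by linarith), ← ENNReal.ofReal_mul (pow_nonneg (by linarith) m)]
  apply ENNReal.ofReal_le_ofReal
  calc (1 - x) ^ m * x = x * (1 - x) ^ m := mul_comm _ _
    _ ≤ 1 / (2 * m) := missed_mass' hm hx0 hx1

lemma ae_cube (dK m : ℕ) (B : ℝ)
    (μ : Measure (EuclideanSpace ℝ (Fin dK))) [IsProbabilityMeasure μ]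
    (hsupp : ∀ᵐ x ∂μ, ∀ i, x i ∈ Set.Icc (-B) B) :
    ∀ᵐ p : (Fin m → EuclideanSpace ℝ (Fin dK)) × EuclideanSpace ℝ (Fin dK)
      ∂((Measure.pi fun _ => μ).prod μ),
      (∀ i j, p.1 i j ∈ Set.Icc (-B) B) ∧ (∀ j, p.2 j ∈ Set.Icc (-B) B) := by
  set C : Set (EuclideanSpace ℝ (Fin dK)) := {x | ∀ j, x j ∈ Set.Icc (-B) B} with hC
  have hCmeas : MeasurableSet C := by
    have : C = ⋂ j, (fun x : EuclideanSpace ℝ (Fin dK) => x j) ⁻¹' Set.Icc (-B) B := by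
      ext x; simp [hC]
    rw [this]
    exact MeasurableSet.iInter fun j => ((measurable_pi_apply j).comp (WithLp.measurable_ofLp 2 _)) measurableSet_Icc
  have hC1 : μ C = 1 := by
    rw [← prob_compl_eq_zero_iff hCmeas]
    rw [ae_iff] at hsupp
    convert hsupp using 2
    ext x; simp [hC]
  have hS : MeasurableSet {k : Fin m → EuclideanSpace ℝ (Fin dK) | ∀ i, k i ∈ C} := by
    have : {k : Fin m → EuclideanSpace ℝ (Fin dK) | ∀ i, k i ∈ C}
        = Set.pi Set.univ (fun _ => C) := by ext k; simp [Set.mem_univ_pi]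
    rw [this]
    exact MeasurableSet.univ_pi fun _ => hCmeas
  have h1 : Measure.pi (fun _ : Fin m => μ) {k | ∀ i, k i ∈ C} = 1 := by
    have hset : {k : Fin m → EuclideanSpace ℝ (Fin dK) | ∀ i, k i ∈ C}
        = Set.pi Set.univ (fun _ => C) := by ext k; simp [Set.mem_univ_pi]
    rw [hset, Measure.pi_pi]
    simp [hC1]
  have h2 : ((Measure.pi fun _ : Fin m => μ).prod μ)
      ({k | ∀ i, k i ∈ C} ×ˢ C) = 1 := by
    rw [Measure.prod_prod, h1, hC1, one_mul]
  rw [ae_iff]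
  have hsub : {p : (Fin m → EuclideanSpace ℝ (Fin dK)) × EuclideanSpace ℝ (Fin dK) |
      ¬((∀ i j, p.1 i j ∈ Set.Icc (-B) B) ∧ (∀ j, p.2 j ∈ Set.Icc (-B) B))}
      = ({k | ∀ i, k i ∈ C} ×ˢ C)ᶜ := by
    ext p; simp [hC, Set.mem_prod]
  rw [hsub, prob_compl_eq_zero_iff (hS.prod hCmeas)]
  exact h2

lemma key_bound (dK m : ℕ) (hm : 0 < m) (B : ℝ) (hB : 0 < B)
    (μ : Measure (EuclideanSpace ℝ (Fin dK))) [IsProbabilityMeasure μ]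
    (hsupp : ∀ᵐ x ∂μ, ∀ i, x i ∈ Set.Icc (-B) B) (T : ℕ) :
    ∫ p : (Fin m → EuclideanSpace ℝ (Fin dK)) × EuclideanSpace ℝ (Fin dK),
        (⨅ i : Fin m, ‖p.1 i - p.2‖) ∂((Measure.pi fun _ => μ).prod μ)
      ≤ Real.sqrt dK * (2 * B) / (T + 1)
        + Real.sqrt dK * (2 * B) * (((T + 1 : ℕ) : ℝ) ^ dK / (2 * m)) := by
  classical
  have hne : Nonempty (Fin m) := ⟨⟨0, hm⟩⟩
  set c : EuclideanSpace ℝ (Fin dK) → (Fin dK → Fin (T + 1)) :=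
    fun x j => boxIdx' B T (x j) with hc
  have hcm : Measurable c :=
    measurable_pi_lambda _ fun j => (measurable_boxIdx' B T).comp ((measurable_pi_apply j).comp (WithLp.measurable_ofLp 2 _))
  set A : Set ((Fin m → EuclideanSpace ℝ (Fin dK)) × EuclideanSpace ℝ (Fin dK)) :=
    {p | ∀ i, c (p.1 i) ≠ c p.2} with hA
  have hAm : MeasurableSet A := by
    have hrw : A = ⋂ i, {p : (Fin m → EuclideanSpace ℝ (Fin dK)) × EuclideanSpace ℝ (Fin dK) |
        c (p.1 i) ≠ c p.2} := by ext p; simp [hA]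
    rw [hrw]
    refine MeasurableSet.iInter fun i => ?_
    have hmap : Measurable fun p : (Fin m → EuclideanSpace ℝ (Fin dK)) × EuclideanSpace ℝ (Fin dK) =>
        (c (p.1 i), c p.2) :=
      ((hcm.comp ((measurable_pi_apply i).comp measurable_fst)).prodMk (hcm.comp measurable_snd))
    exact hmap ((Set.to_countable
      {x : (Fin dK → Fin (T+1)) × (Fin dK → Fin (T+1)) | x.1 ≠ x.2}).measurableSet)
  have hbddB : ∀ p : (Fin m → EuclideanSpace ℝ (Fin dK)) × EuclideanSpace ℝ (Fin dK),
      BddBelow (Set.range fun i : Fin m => ‖p.1 i - p.2‖) := fun p =>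
    ⟨0, by rintro y ⟨i, rfl⟩; exact norm_nonneg _⟩
  have hnonneg : ∀ p : (Fin m → EuclideanSpace ℝ (Fin dK)) × EuclideanSpace ℝ (Fin dK),
      0 ≤ ⨅ i : Fin m, ‖p.1 i - p.2‖ := fun p => le_ciInf fun i => norm_nonneg _
  have hbound : ∀ᵐ p ∂((Measure.pi fun _ : Fin m => μ).prod μ),
      (⨅ i : Fin m, ‖p.1 i - p.2‖) ≤ Real.sqrt dK * (2 * B) / (T + 1)
        + A.indicator (fun _ => Real.sqrt dK * (2 * B)) p := by
    filter_upwards [ae_cube dK m B μ hsupp] with p hp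
    by_cases hmem : p ∈ A
    · rw [Set.indicator_of_mem hmem]
      have h1 : (⨅ i : Fin m, ‖p.1 i - p.2‖) ≤ ‖p.1 ⟨0, hm⟩ - p.2‖ := ciInf_le (hbddB p) _
      have h2 : ‖p.1 ⟨0, hm⟩ - p.2‖ ≤ Real.sqrt dK * (2 * B) := by
        apply norm_le_of_coord (by linarith)
        intro j
        have ha := hp.1 ⟨0, hm⟩ j
        have hb := hp.2 j
        rw [abs_le]
        exact ⟨by linarith [ha.1, hb.2], by linarith [ha.2, hb.1]⟩
      have h3 : 0 ≤ Real.sqrt dK * (2 * B) / (T + 1) := by positivity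
      linarith
    · rw [Set.indicator_of_notMem hmem, add_zero]
      have hmem' : ∃ i, c (p.1 i) = c p.2 := by
        simpa [hA] using hmem
      obtain ⟨i, hi⟩ := hmem'
      have h1 : (⨅ i : Fin m, ‖p.1 i - p.2‖) ≤ ‖p.1 i - p.2‖ := ciInf_le (hbddB p) _
      have h2 : ‖p.1 i - p.2‖ ≤ Real.sqrt dK * (2 * B / (T + 1)) := by
        apply norm_le_of_coord (by positivity)
        intro j
        exact boxIdx'_dist hB T (hp.1 i j) (hp.2 j) (congrFun hi j)
      calc (⨅ i : Fin m, ‖p.1 i - p.2‖) ≤ ‖p.1 i - p.2‖ := h1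
        _ ≤ Real.sqrt dK * (2 * B / (T + 1)) := h2
        _ = Real.sqrt dK * (2 * B) / (T + 1) := by ring
  have hint2 : Integrable (A.indicator fun _ => Real.sqrt dK * (2 * B))
      ((Measure.pi fun _ : Fin m => μ).prod μ) := (integrable_const _).indicator hAm
  have hmono := integral_mono_of_nonneg (Filter.Eventually.of_forall hnonneg)
      ((integrable_const _).add hint2) hbound
  simp only [Pi.add_apply] at hmono
  rw [integral_add (integrable_const _) hint2, integral_const,
    integral_indicator_const _ hAm] at hmono
  simp only [probReal_univ, measureReal_def, measure_univ, ENNReal.toReal_one, one_smul, smul_eq_mul, one_mul] at hmono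
  -- now bound the measure of A
  have hPA : (((Measure.pi fun _ : Fin m => μ).prod μ) A).toReal
      ≤ ((T + 1 : ℕ) : ℝ) ^ dK / (2 * m) := by
    have hprod : ((Measure.pi fun _ : Fin m => μ).prod μ) A
        = ∫⁻ q, (Measure.pi fun _ : Fin m => μ) ((fun k => (k, q)) ⁻¹' A) ∂μ :=
      Measure.prod_apply_symm hAm
    have hslice : ∀ q : EuclideanSpace ℝ (Fin dK),
        (Measure.pi fun _ : Fin m => μ) ((fun k => (k, q)) ⁻¹' A)
          = (1 - μ (c ⁻¹' {c q})) ^ m := by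
      intro q
      have hset : (fun k => (k, q)) ⁻¹' A
          = Set.pi Set.univ (fun _ : Fin m => (c ⁻¹' {c q})ᶜ) := by
        ext k
        simp [hA, Set.mem_univ_pi]
      rw [hset, Measure.pi_pi]
      rw [measure_compl (hcm (measurableSet_singleton _)) (measure_ne_top μ _), measure_univ]
      rw [Finset.prod_const, Finset.card_univ, Fintype.card_fin]
    -- rewrite as integral over the finite index type
    have hg : Measurable fun j : Fin dK → Fin (T + 1) => (1 - μ (c ⁻¹' {j})) ^ m :=
      measurable_of_countable _
    have hmap : ∫⁻ q, (1 - μ (c ⁻¹' {c q})) ^ m ∂μ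
        = ∫⁻ j, (1 - μ (c ⁻¹' {j})) ^ m ∂(μ.map c) := (lintegral_map hg hcm).symm
    have hsum : ∫⁻ j, (1 - μ (c ⁻¹' {j})) ^ m ∂(μ.map c)
        = ∑ j : Fin dK → Fin (T + 1), (1 - μ (c ⁻¹' {j})) ^ m * (μ.map c) {j} :=
      lintegral_fintype _
    have hterm : ∀ j : Fin dK → Fin (T + 1),
        (1 - μ (c ⁻¹' {j})) ^ m * (μ.map c) {j} ≤ ENNReal.ofReal (1 / (2 * m)) := by
      intro j
      rw [Measure.map_apply hcm (measurableSet_singleton _)]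
      exact term_bound' hm (prob_le_one)
    have hee : ((Measure.pi fun _ : Fin m => μ).prod μ) A
        ≤ ((T + 1) ^ dK : ℕ) * ENNReal.ofReal (1 / (2 * m)) := by
      rw [hprod]
      calc ∫⁻ q, (Measure.pi fun _ : Fin m => μ) ((fun k => (k, q)) ⁻¹' A) ∂μ
          = ∫⁻ q, (1 - μ (c ⁻¹' {c q})) ^ m ∂μ := by
            apply lintegral_congr; intro q; rw [hslice]
        _ = ∑ j : Fin dK → Fin (T + 1), (1 - μ (c ⁻¹' {j})) ^ m * (μ.map c) {j} := by
            rw [hmap, hsum]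
        _ ≤ ∑ _j : Fin dK → Fin (T + 1), ENNReal.ofReal (1 / (2 * m)) :=
            Finset.sum_le_sum fun j _ => hterm j
        _ = ((T + 1) ^ dK : ℕ) * ENNReal.ofReal (1 / (2 * m)) := by
            rw [Finset.sum_const, Finset.card_univ]
            simp [Fintype.card_fun, Fintype.card_fin, nsmul_eq_mul]
    refine ENNReal.toReal_le_of_le_ofReal (by positivity) ?_
    refine hee.trans ?_
    rw [show (((T + 1) ^ dK : ℕ) : ℝ≥0∞) = ENNReal.ofReal (((T + 1 : ℕ) : ℝ) ^ dK) by
      rw [← ENNReal.ofReal_natCast]; norm_num]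
    rw [← ENNReal.ofReal_mul (by positivity)]
    apply ENNReal.ofReal_le_ofReal
    exact le_of_eq (by ring)
  refine hmono.trans ?_
  have h5 : (((Measure.pi fun _ : Fin m => μ).prod μ) A).toReal * (Real.sqrt dK * (2 * B))
      ≤ Real.sqrt dK * (2 * B) * (((T + 1 : ℕ) : ℝ) ^ dK / (2 * m)) := by
    rw [mul_comm]
    exact mul_le_mul_of_nonneg_left hPA (by positivity)
  linarith

lemma triv_bound (dK m : ℕ) (hm : 0 < m) (B : ℝ) (hB : 0 < B)
    (μ : Measure (EuclideanSpace ℝ (Fin dK))) [IsProbabilityMeasure μ]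
    (hsupp : ∀ᵐ x ∂μ, ∀ i, x i ∈ Set.Icc (-B) B) :
    ∫ p : (Fin m → EuclideanSpace ℝ (Fin dK)) × EuclideanSpace ℝ (Fin dK),
        (⨅ i : Fin m, ‖p.1 i - p.2‖) ∂((Measure.pi fun _ => μ).prod μ)
      ≤ Real.sqrt dK * (2 * B) := by
  have hne : Nonempty (Fin m) := ⟨⟨0, hm⟩⟩
  have hbddB : ∀ p : (Fin m → EuclideanSpace ℝ (Fin dK)) × EuclideanSpace ℝ (Fin dK),
      BddBelow (Set.range fun i : Fin m => ‖p.1 i - p.2‖) := fun p =>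
    ⟨0, by rintro y ⟨i, rfl⟩; exact norm_nonneg _⟩
  have hnonneg : ∀ p : (Fin m → EuclideanSpace ℝ (Fin dK)) × EuclideanSpace ℝ (Fin dK),
      0 ≤ ⨅ i : Fin m, ‖p.1 i - p.2‖ := fun p => le_ciInf fun i => norm_nonneg _
  have hbound : ∀ᵐ p ∂((Measure.pi fun _ : Fin m => μ).prod μ),
      (⨅ i : Fin m, ‖p.1 i - p.2‖) ≤ Real.sqrt dK * (2 * B) := by
    filter_upwards [ae_cube dK m B μ hsupp] with p hp
    refine (ciInf_le (hbddB p) ⟨0, hm⟩).trans ?_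
    apply norm_le_of_coord (by linarith)
    intro j
    have ha := hp.1 ⟨0, hm⟩ j
    have hb := hp.2 j
    rw [abs_le]
    exact ⟨by linarith [ha.1, hb.2], by linarith [ha.2, hb.1]⟩
  have h := integral_mono_of_nonneg (Filter.Eventually.of_forall hnonneg)
      (integrable_const _) hbound
  rwa [integral_const, probReal_univ, one_smul] at h

/-- Expected nearest-neighbor distance bound: for `q, k₁, …, k_m` i.i.d. from a
distribution supported on `[-B,B]^{d_K}`, the expected distance from `q` to its
nearest sample is at most `4·√(d_K)·B·m^{-1/(d_K+1)}`. -/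
theorem expected_nearest_neighbor_dist_le
    (dK m : ℕ) (hm : 0 < m) (B : ℝ) (hB : 0 < B)
    (μ : Measure (EuclideanSpace ℝ (Fin dK))) [IsProbabilityMeasure μ]
    (hsupp : ∀ᵐ x ∂μ, ∀ i, x i ∈ Set.Icc (-B) B) :
    ∫ p : (Fin m → EuclideanSpace ℝ (Fin dK)) × EuclideanSpace ℝ (Fin dK),
        (⨅ i : Fin m, ‖p.1 i - p.2‖) ∂((Measure.pi fun _ => μ).prod μ)
      ≤ 4 * Real.sqrt dK * B * (m:ℝ) ^ (-(1:ℝ)/(dK+1)) := by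
  have hm0 : (0:ℝ) < (m:ℝ) := by exact_mod_cast hm
  set s : ℝ := (m:ℝ) ^ ((1:ℝ)/(dK+1)) with hs
  have hspos : 0 < s := Real.rpow_pos_of_pos hm0 _
  have hrhs : 4 * Real.sqrt dK * B * (m:ℝ) ^ (-(1:ℝ)/(dK+1)) = 4 * Real.sqrt dK * B / s := by
    rw [hs, neg_div, Real.rpow_neg (le_of_lt hm0)]
    ring
  have hm1 : s ^ (dK + 1) = (m:ℝ) := by
    calc s ^ (dK + 1) = s ^ (((dK + 1 : ℕ)):ℝ) := (Real.rpow_natCast s (dK + 1)).symm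
      _ = (m:ℝ) ^ (((1:ℝ)/(dK+1)) * ((dK + 1 : ℕ):ℝ)) := by
          rw [hs, ← Real.rpow_mul (Nat.cast_nonneg m)]
      _ = (m:ℝ) ^ (1:ℝ) := by
          congr 1
          have hne : ((dK:ℝ) + 1) ≠ 0 := by positivity
          push_cast
          field_simp
      _ = (m:ℝ) := Real.rpow_one _
  rw [hrhs]
  rcases lt_or_ge s 2 with hcase | hcase
  · refine (triv_bound dK m hm B hB μ hsupp).trans ?_
    rw [le_div_iff₀ hspos]
    nlinarith [mul_nonneg (mul_nonneg (Real.sqrt_nonneg (dK:ℝ)) hB.le)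
      (by linarith : (0:ℝ) ≤ 2 - s)]
  · set N := ⌊s⌋₊ with hN
    have hN2 : 2 ≤ N := Nat.le_floor (by exact_mod_cast hcase)
    have hNle : (N:ℝ) ≤ s := Nat.floor_le (le_of_lt hspos)
    have hsleN : s ≤ (N:ℝ) + 1 := le_of_lt (Nat.lt_floor_add_one s)
    have hN2R : (2:ℝ) ≤ (N:ℝ) := by exact_mod_cast hN2
    have hNpos : (0:ℝ) < (N:ℝ) := by linarith
    have hkey := key_bound dK m hm B hB μ hsupp (N - 1)
    have hsub : N - 1 + 1 = N := by omega
    have hc1 : ((N - 1 : ℕ) : ℝ) + 1 = (N:ℝ) := by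
      have h1 : 1 ≤ N := by omega
      push_cast [Nat.cast_sub h1]
      ring
    rw [hc1] at hkey
    simp only [hsub] at hkey
    refine hkey.trans ?_
    have h2s3N : 2 * s ≤ 3 * (N:ℝ) := by linarith
    have e1 : Real.sqrt dK * (2 * B) / (N:ℝ) ≤ 3 * (Real.sqrt dK * B) / s := by
      rw [div_le_div_iff₀ hNpos hspos]
      nlinarith [mul_le_mul_of_nonneg_left h2s3N
        (mul_nonneg (Real.sqrt_nonneg (dK:ℝ)) hB.le)]
    have hp : ((N:ℝ)) ^ dK ≤ s ^ dK := pow_le_pow_left₀ (Nat.cast_nonneg N) hNle dK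
    have e2 : ((N:ℝ)) ^ dK / (2 * (m:ℝ)) ≤ 1 / (2 * s) := by
      rw [div_le_div_iff₀ (by positivity) (by positivity)]
      have hss : s ^ dK * s = s ^ (dK + 1) := by ring
      nlinarith [mul_le_mul_of_nonneg_right hp (by positivity : (0:ℝ) ≤ 2 * s)]
    have e3 : Real.sqrt dK * (2 * B) * (((N:ℝ)) ^ dK / (2 * (m:ℝ)))
        ≤ Real.sqrt dK * B / s := by
      calc Real.sqrt dK * (2 * B) * (((N:ℝ)) ^ dK / (2 * (m:ℝ)))
          ≤ Real.sqrt dK * (2 * B) * (1 / (2 * s)) :=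
            mul_le_mul_of_nonneg_left e2 (by positivity)
        _ = Real.sqrt dK * B / s := by
            field_simp
    have hfin : 3 * (Real.sqrt dK * B) / s + Real.sqrt dK * B / s
        = 4 * Real.sqrt dK * B / s := by
      field_simp
      ring
    linarith [e1, e3, hfin]
end
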